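/- arXiv:0904.1481 — 2 statements merged into one kernel-verified Lean document; each statement's English description precedes it below -/
import Mathlib

section
/- Let g be the signed coarsening sum on compositions defined by g(m₁,…,m_n) = ∑ (-1)^{n-l} L!/(i₁!⋯i_l!) over all coarsenings (i₁,…,i_l) of (m₁,…,m_n). Then for any composition π of L−a−1 and any a ≥ 1, g(1^{a+1},π) + g(1^{a-1},2,π) = C(L,a) · g'(1,π), where g' is the analogous function for compositions of L−a and (1^{a+1},π) denotes a+1 ones followed by the parts of π. -/
/-- All coarsenings of a composition: the compositions obtained from it by
successively merging adjacent parts. -/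
def coarsenings : List ℕ → List (List ℕ)
  | [] => [[]]
  | [a] => [[a]]
  | a :: b :: t => ((coarsenings (b :: t)).map (a :: ·)) ++ coarsenings ((a + b) :: t)
termination_by m => m.length
decreasing_by all_goals simp

/-- The multinomial coefficient `L! / (i₁! ⋯ i_l!)`. -/
def mult (L : ℕ) (i : List ℕ) : ℤ :=
  ((Nat.factorial L / (i.map Nat.factorial).prod : ℕ) : ℤ)

/-- The signed coarsening sum
`g(m) = ∑ (-1)^(n-l) · L!/(i₁!⋯i_l!)` over all coarsenings `(i₁,…,i_l)` of `m`. -/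
def g (L : ℕ) (m : List ℕ) : ℤ :=
  ((coarsenings m).map (fun i => (-1 : ℤ) ^ (m.length - i.length) * mult L i)).sum

lemma coarsenings_sum : ∀ (m : List ℕ), ∀ c ∈ coarsenings m, c.sum = m.sum := by
  intro m
  induction m using coarsenings.induct with
  | case1 => simp [coarsenings]
  | case2 a => simp [coarsenings]
  | case3 a b t ih1 ih2 =>
    intro c hc
    rw [coarsenings] at hc
    simp only [List.mem_append, List.mem_map] at hc
    rcases hc with ⟨d, hd, rfl⟩ | hc
    · have := ih1 d hd; simp at this ⊢; omega
    · have := ih2 c hc; simp at this ⊢; omega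

lemma coarsenings_length : ∀ (m : List ℕ), ∀ c ∈ coarsenings m, c.length ≤ m.length := by
  intro m
  induction m using coarsenings.induct with
  | case1 => simp [coarsenings]
  | case2 a => simp [coarsenings]
  | case3 a b t ih1 ih2 =>
    intro c hc
    rw [coarsenings] at hc
    simp only [List.mem_append, List.mem_map] at hc
    rcases hc with ⟨d, hd, rfl⟩ | hc
    · have := ih1 d hd; simp at this ⊢; omega
    · have := ih2 c hc; simp at this ⊢; omega

lemma prod_factorial_dvd : ∀ (c : List ℕ), (c.map Nat.factorial).prod ∣ (c.sum).factorial := by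
  intro c
  induction c with
  | nil => simp
  | cons h t ih =>
    simp only [List.map_cons, List.prod_cons, List.sum_cons]
    calc h.factorial * (t.map Nat.factorial).prod
        ∣ h.factorial * (t.sum).factorial := mul_dvd_mul_left _ ih
      _ ∣ (h + t.sum).factorial := Nat.factorial_mul_factorial_dvd_factorial_add _ _

lemma mult_append {a b : ℕ} {c₁ c₂ : List ℕ} (h₁ : c₁.sum = a) (h₂ : c₂.sum = b) :
    mult (a + b) (c₁ ++ c₂) = ((a + b).choose a : ℤ) * mult a c₁ * mult b c₂ := by
  have d1 : (c₁.map Nat.factorial).prod ∣ a.factorial := h₁ ▸ prod_factorial_dvd c₁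
  have d2 : (c₂.map Nat.factorial).prod ∣ b.factorial := h₂ ▸ prod_factorial_dvd c₂
  obtain ⟨q₁, hq₁⟩ := d1
  obtain ⟨q₂, hq₂⟩ := d2
  have hp1 : 0 < (c₁.map Nat.factorial).prod :=
    List.prod_pos (by simp; intro x hx; exact Nat.factorial_pos x)
  have hp2 : 0 < (c₂.map Nat.factorial).prod :=
    List.prod_pos (by simp; intro x hx; exact Nat.factorial_pos x)
  have hfact : (a + b).factorial = (a + b).choose a * a.factorial * b.factorial := by
    rw [← Nat.choose_mul_factorial_mul_factorial (Nat.le_add_right a b)]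
    congr 2
    omega
  have key : (a + b).factorial
      = ((a + b).choose a * q₁ * q₂) * ((c₁.map Nat.factorial).prod * (c₂.map Nat.factorial).prod) := by
    rw [hfact, hq₁, hq₂]; ring
  unfold mult
  rw [List.map_append, List.prod_append, key,
    Nat.mul_div_cancel _ (Nat.mul_pos hp1 hp2), hq₁, hq₂,
    Nat.mul_div_cancel_left _ hp1, Nat.mul_div_cancel_left _ hp2]
  push_cast
  ring

lemma mult_single (x : ℕ) : mult x [x] = 1 := by
  simp [mult, Nat.div_self (Nat.factorial_pos x)]

lemma split_nil (f : List ℕ → ℤ) (x y : ℕ) (v : List ℕ) :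
    ((coarsenings (x :: y :: v)).map f).sum
      = ((coarsenings [x]).map (fun c₁ => ((coarsenings (y :: v)).map (fun c₂ => f (c₁ ++ c₂))).sum)).sum
        + ((coarsenings ((x + y) :: v)).map f).sum := by
  rw [coarsenings]
  simp [coarsenings, List.map_map, Function.comp_def]

lemma split (u : List ℕ) : ∀ (f : List ℕ → ℤ) (x y : ℕ) (v : List ℕ),
    ((coarsenings (u ++ x :: y :: v)).map f).sum
      = ((coarsenings (u ++ [x])).map (fun c₁ => ((coarsenings (y :: v)).map (fun c₂ => f (c₁ ++ c₂))).sum)).sum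
        + ((coarsenings (u ++ (x + y) :: v)).map f).sum := by
  induction u using coarsenings.induct with
  | case1 => exact fun f x y v => split_nil f x y v
  | case2 a =>
    intro f x y v
    simp only [List.cons_append, List.nil_append]
    rw [show coarsenings (a :: x :: y :: v)
        = ((coarsenings (x :: y :: v)).map (a :: ·)) ++ coarsenings ((a + x) :: y :: v) from by
      rw [coarsenings]]
    rw [show coarsenings (a :: (x + y) :: v)
        = ((coarsenings ((x + y) :: v)).map (a :: ·)) ++ coarsenings ((a + (x + y)) :: v) from by
      rw [coarsenings]]
    rw [show coarsenings [a, x] = [[a, x], [a + x]] from by simp [coarsenings]]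
    have h1 := split_nil (fun c => f (a :: c)) x y v
    have h2 := split_nil f (a + x) y v
    simp only [List.map_append, List.sum_append, List.map_map, Function.comp_def, coarsenings,
      List.map_cons, List.map_nil, List.sum_cons, List.sum_nil, List.cons_append,
      List.nil_append] at h1 h2 ⊢
    rw [h1, h2, show a + x + y = a + (x + y) from by ring]
    ring
  | case3 a b t ih1 ih2 =>
    intro f x y v
    simp only [List.cons_append]
    rw [show coarsenings (a :: b :: (t ++ x :: y :: v))
        = ((coarsenings (b :: (t ++ x :: y :: v))).map (a :: ·))
          ++ coarsenings ((a + b) :: (t ++ x :: y :: v)) from by rw [coarsenings]]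
    rw [show coarsenings (a :: b :: (t ++ (x + y) :: v))
        = ((coarsenings (b :: (t ++ (x + y) :: v))).map (a :: ·))
          ++ coarsenings ((a + b) :: (t ++ (x + y) :: v)) from by rw [coarsenings]]
    rw [show coarsenings (a :: b :: (t ++ [x]))
        = ((coarsenings (b :: (t ++ [x]))).map (a :: ·))
          ++ coarsenings ((a + b) :: (t ++ [x])) from by rw [coarsenings]]
    have h1 := ih1 (fun c => f (a :: c)) x y v
    have h2 := ih2 f x y v
    simp only [List.cons_append] at h1 h2
    simp only [List.map_append, List.sum_append, List.map_map, Function.comp_def,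
      List.cons_append] at *
    rw [h1, h2]
    ring

lemma rep_split' : ∀ (n b : ℕ) (f : List ℕ → ℤ),
    ((coarsenings (b :: List.replicate n 1)).map f).sum
      = ∑ j ∈ Finset.range (n + 1),
          ((coarsenings (List.replicate j 1)).map (fun d => f ((b + n - j) :: d))).sum := by
  intro n
  induction n with
  | zero => intro b f; simp [coarsenings]
  | succ n ih =>
    intro b f
    rw [List.replicate_succ,
      show coarsenings (b :: 1 :: List.replicate n 1)
          = ((coarsenings (1 :: List.replicate n 1)).map (b :: ·))
            ++ coarsenings ((b + 1) :: List.replicate n 1) from by rw [coarsenings]]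
    rw [List.map_append, List.sum_append, List.map_map, ih (b + 1) f]
    conv_rhs => rw [Finset.sum_range_succ]
    have h1 : (List.map (f ∘ fun x => b :: x) (coarsenings (1 :: List.replicate n 1))).sum
        = (List.map (fun d => f ((b + (n + 1) - (n + 1)) :: d))
            (coarsenings (List.replicate (n + 1) 1))).sum := by
      simp [Function.comp_def, List.replicate_succ]
    rw [h1, add_comm]
    congr 1
    apply Finset.sum_congr rfl
    intro j hj
    simp only [Finset.mem_range] at hj
    have h2 : b + 1 + n - j = b + (n + 1) - j := by omega
    rw [h2]

lemma alt_sum (k : ℕ) : ∑ j ∈ Finset.range (k + 1), (-1 : ℤ) ^ (k - j) * ((k + 1).choose j) = 1 := by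
  have hr := Finset.sum_range_reflect (fun j => (-1 : ℤ) ^ (k - j) * ((k + 1).choose j)) (k + 1)
  rw [← hr]
  have h1 : ∀ j ∈ Finset.range (k + 1),
      (-1 : ℤ) ^ (k - (k + 1 - 1 - j)) * ((k + 1).choose (k + 1 - 1 - j))
        = (-1 : ℤ) ^ j * ((k + 1).choose (j + 1)) := by
    intro j hj
    simp only [Finset.mem_range] at hj
    have h2 : k - (k + 1 - 1 - j) = j := by omega
    have h3 : (k + 1).choose (k + 1 - 1 - j) = (k + 1).choose (j + 1) := by
      rw [show k + 1 - 1 - j = (k + 1) - (j + 1) from by omega, Nat.choose_symm (by omega)]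
    rw [h2, h3]
  rw [Finset.sum_congr rfl h1]
  have h4 := Int.alternating_sum_range_choose (n := k + 1)
  rw [Finset.sum_range_succ'] at h4
  simp only [Nat.choose_zero_right, pow_zero, one_mul, Nat.cast_one] at h4
  simp only [if_neg (Nat.succ_ne_zero k)] at h4
  have h5 : ∑ i ∈ Finset.range (k + 1), (-1 : ℤ) ^ (i + 1) * ((k + 1).choose (i + 1)) = -1 := by
    linarith
  calc ∑ j ∈ Finset.range (k + 1), (-1 : ℤ) ^ j * ((k + 1).choose (j + 1))
      = -∑ j ∈ Finset.range (k + 1), (-1 : ℤ) ^ (j + 1) * ((k + 1).choose (j + 1)) := by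
        rw [← Finset.sum_neg_distrib]
        apply Finset.sum_congr rfl
        intro j _
        rw [pow_succ]
        ring
    _ = 1 := by rw [h5]; ring

lemma sum_map_neg' (l : List (List ℕ)) (h : List ℕ → ℤ) :
    (l.map (fun x => -(h x))).sum = -((l.map h).sum) := by
  induction l with
  | nil => simp
  | cons x t ih => simp [ih]; ring

lemma sum_map_mul_left' (l : List (List ℕ)) (h : List ℕ → ℤ) (r : ℤ) :
    (l.map (fun x => r * h x)).sum = r * (l.map h).sum := by
  induction l with
  | nil => simp
  | cons x t ih => simp [ih]; ring

lemma g_ones : ∀ n, g n (List.replicate n 1) = 1 := by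
  intro n
  induction n using Nat.strong_induction_on with
  | _ n ih =>
    match n with
    | 0 => simp [g, coarsenings, mult]
    | (k + 1) =>
      have hg : g (k + 1) (List.replicate (k + 1) 1)
          = ((coarsenings (1 :: List.replicate k 1)).map
              (fun i => (-1 : ℤ) ^ (k + 1 - i.length) * mult (k + 1) i)).sum := by
        simp only [g, List.replicate_succ, List.length_cons, List.length_replicate]
      rw [hg, rep_split' k 1 (fun i => (-1 : ℤ) ^ (k + 1 - i.length) * mult (k + 1) i)]
      have key : ∀ j ∈ Finset.range (k + 1),
          ((coarsenings (List.replicate j 1)).map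
            (fun d => (-1 : ℤ) ^ (k + 1 - ((1 + k - j) :: d).length) * mult (k + 1) ((1 + k - j) :: d))).sum
          = (-1 : ℤ) ^ (k - j) * ((k + 1).choose j) := by
        intro j hj
        simp only [Finset.mem_range] at hj
        have hj' : j ≤ k := by omega
        have hmap : (coarsenings (List.replicate j 1)).map
            (fun d => (-1 : ℤ) ^ (k + 1 - ((1 + k - j) :: d).length) * mult (k + 1) ((1 + k - j) :: d))
            = (coarsenings (List.replicate j 1)).map
              (fun d => ((-1 : ℤ) ^ (k - j) * ((k + 1).choose j))
                * ((-1 : ℤ) ^ (j - d.length) * mult j d)) := by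
          apply List.map_congr_left
          intro d hd
          have hs : d.sum = j := by
            have := coarsenings_sum _ d hd; simpa using this
          have hl : d.length ≤ j := by
            have := coarsenings_length _ d hd; simpa using this
          have hm : mult (k + 1) ((1 + k - j) :: d) = ((k + 1).choose j : ℤ) * mult j d := by
            have e1 : (1 + k - j) :: d = [k + 1 - j] ++ d := by
              rw [show 1 + k - j = k + 1 - j from by omega]; rfl
            have e2 := mult_append (a := k + 1 - j) (b := j) (c₁ := [k + 1 - j]) (c₂ := d)
              (by simp) hs
            rw [show k + 1 - j + j = k + 1 from by omega] at e2
            rw [e1, e2, mult_single, Nat.choose_symm (by omega)]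
            ring
          have hsgn : (-1 : ℤ) ^ (k + 1 - ((1 + k - j) :: d).length)
              = (-1 : ℤ) ^ (k - j) * (-1 : ℤ) ^ (j - d.length) := by
            rw [List.length_cons, ← pow_add]
            congr 1
            omega
          rw [hsgn, hm]
          ring
        rw [hmap, sum_map_mul_left']
        have hgj : ((coarsenings (List.replicate j 1)).map
            (fun d => (-1 : ℤ) ^ (j - d.length) * mult j d)).sum = g j (List.replicate j 1) := by
          simp only [g, List.length_replicate]
        rw [hgj, ih j (by omega)]
        ring
      rw [Finset.sum_congr rfl key]
      exact alt_sum k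

/-- `g(1^{a+1},π) + g(1^{a-1},2,π) = C(L,a) · g'(1,π)` where `g'` is the analogous
signed coarsening sum for compositions of `L − a`. -/
theorem g_pair_identity (L a : ℕ) (π : List ℕ)
    (ha : 1 ≤ a) (hπ : ∀ x ∈ π, 1 ≤ x) (hsum : (a + 1) + π.sum = L) :
    g L (List.replicate (a + 1) 1 ++ π) + g L (List.replicate (a - 1) 1 ++ 2 :: π)
      = (L.choose a : ℤ) * g (L - a) (1 :: π) := by
  have haL : a < L := by omega
  set f : List ℕ → ℤ := fun c => (-1 : ℤ) ^ (a + (π.length + 1) - c.length) * mult L c with hf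
  have hsplit := split (List.replicate (a - 1) 1) f 1 1 π
  have e1 : List.replicate (a - 1) 1 ++ 1 :: 1 :: π = List.replicate (a + 1) 1 ++ π := by
    rw [show a + 1 = (a - 1) + 2 from by omega, List.replicate_add, List.append_assoc]
    rfl
  have e2 : List.replicate (a - 1) 1 ++ [1] = List.replicate a 1 := by
    rw [← List.replicate_succ']
    congr 1
    omega
  rw [e1, e2, show (1 : ℕ) + 1 = 2 from rfl] at hsplit
  have hg1 : ((coarsenings (List.replicate (a + 1) 1 ++ π)).map f).sum
      = g L (List.replicate (a + 1) 1 ++ π) := by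
    simp only [g, List.length_append, List.length_replicate]
    congr 1
    apply List.map_congr_left
    intro c _
    simp only [hf]
    rw [show a + (π.length + 1) - c.length = a + 1 + π.length - c.length from by omega]
  have hg2 : ((coarsenings (List.replicate (a - 1) 1 ++ 2 :: π)).map f).sum
      = - g L (List.replicate (a - 1) 1 ++ 2 :: π) := by
    rw [g, ← sum_map_neg']
    congr 1
    apply List.map_congr_left
    intro c hc
    have hl := coarsenings_length _ c hc
    rw [List.length_append, List.length_replicate, List.length_cons] at hl
    rw [hf]
    simp only [List.length_append, List.length_replicate, List.length_cons]
    rw [show a + (π.length + 1) - c.length = ((a - 1) + (π.length + 1) - c.length) + 1 from by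
      omega, pow_succ]
    ring
  have hmid : ((coarsenings (List.replicate a 1)).map
      (fun c₁ => ((coarsenings (1 :: π)).map (fun c₂ => f (c₁ ++ c₂))).sum)).sum
      = (L.choose a : ℤ) * g (L - a) (1 :: π) := by
    have hinner : ∀ c₁ ∈ coarsenings (List.replicate a 1),
        ((coarsenings (1 :: π)).map (fun c₂ => f (c₁ ++ c₂))).sum
          = ((L.choose a : ℤ) * ((-1 : ℤ) ^ (a - c₁.length) * mult a c₁)) * g (L - a) (1 :: π) := by
      intro c₁ h₁
      have hs₁ : c₁.sum = a := by have := coarsenings_sum _ c₁ h₁; simpa using this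
      have hl₁ : c₁.length ≤ a := by have := coarsenings_length _ c₁ h₁; simpa using this
      have hmap : (coarsenings (1 :: π)).map (fun c₂ => f (c₁ ++ c₂))
          = (coarsenings (1 :: π)).map
            (fun c₂ => ((L.choose a : ℤ) * ((-1 : ℤ) ^ (a - c₁.length) * mult a c₁))
              * ((-1 : ℤ) ^ (π.length + 1 - c₂.length) * mult (L - a) c₂)) := by
        apply List.map_congr_left
        intro c₂ h₂
        have hs₂ : c₂.sum = L - a := by
          have := coarsenings_sum _ c₂ h₂; simp at this; omega
        have hl₂ : c₂.length ≤ π.length + 1 := by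
          have := coarsenings_length _ c₂ h₂; simpa using this
        have hm := mult_append (a := a) (b := L - a) hs₁ hs₂
        rw [show a + (L - a) = L from by omega] at hm
        rw [hf]
        simp only [List.length_append]
        rw [hm, show a + (π.length + 1) - (c₁.length + c₂.length)
            = (a - c₁.length) + ((π.length + 1) - c₂.length) from by omega, pow_add]
        ring
      rw [hmap, sum_map_mul_left']
      have hgr : ((coarsenings (1 :: π)).map
          (fun c₂ => (-1 : ℤ) ^ (π.length + 1 - c₂.length) * mult (L - a) c₂)).sum
          = g (L - a) (1 :: π) := by
        simp only [g, List.length_cons]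
      rw [hgr]
    rw [List.map_congr_left hinner]
    have : (coarsenings (List.replicate a 1)).map
        (fun c₁ => ((L.choose a : ℤ) * ((-1 : ℤ) ^ (a - c₁.length) * mult a c₁)) * g (L - a) (1 :: π))
        = (coarsenings (List.replicate a 1)).map
          (fun c₁ => ((L.choose a : ℤ) * g (L - a) (1 :: π))
            * ((-1 : ℤ) ^ (a - c₁.length) * mult a c₁)) := by
      apply List.map_congr_left
      intro c₁ _
      ring
    rw [this, sum_map_mul_left']
    have hga : ((coarsenings (List.replicate a 1)).map
        (fun c₁ => (-1 : ℤ) ^ (a - c₁.length) * mult a c₁)).sum = g a (List.replicate a 1) := by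
      simp only [g, List.length_replicate]
    rw [hga, g_ones]
    ring
  rw [hg1, hg2, hmid] at hsplit
  linarith
end

section
/- The signed reversed vector is a ground-state partner: in the maximal sector of permutations of (1,…,L), the vector ∑_k sgn(k) |k_L,…,k₁⟩ is an eigenvector of the multi-species ASEP Hamiltonian H with eigenvalue −L(p+q); equivalently, (H + L(p+q)) ∑_{k∈S_L} sgn(k)|k_L,…,k₁⟩ = 0. -/
/-- The hopping rate `Θ(x) = p` for `x > 0` and `q` for `x < 0`. -/
noncomputable def theta (p q : ℝ) (x : ℤ) : ℝ := if 0 < x then p else if x < 0 then q else 0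

/-- Cyclic successor on `Fin L`. -/
def cycSucc {L : ℕ} (i : Fin L) : Fin L := ⟨((i : ℕ) + 1) % L, Nat.mod_lt _ i.pos⟩

/-- The configuration (in the maximal sector of permutations of `(1,…,L)`)
obtained from `k` by interchanging the local states at sites `i` and `i+1`. -/
def swapK {L : ℕ} (k : Equiv.Perm (Fin L)) (i : Fin L) : Equiv.Perm (Fin L) :=
  (Equiv.swap i (cycSucc i)).trans k

/-- The multi-species ASEP Hamiltonian on the maximal sector, as a matrix:
`H|k⟩ = ∑_{i∈ℤ_L} Θ(k_i−k_{i+1}) (|k^{(i)}⟩ − |k⟩)`. -/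
noncomputable def HmatMax (p q : ℝ) (L : ℕ) :
    Matrix (Equiv.Perm (Fin L)) (Equiv.Perm (Fin L)) ℝ :=
  fun c k => ∑ i : Fin L, theta p q ((k i : ℤ) - (k (cycSucc i) : ℤ)) *
    ((if c = swapK k i then 1 else 0) - (if c = k then 1 else 0))

lemma swapK_swapK {L : ℕ} (k : Equiv.Perm (Fin L)) (i : Fin L) :
    swapK (swapK k i) i = k := by
  unfold swapK
  rw [← Equiv.trans_assoc, Equiv.swap_swap, Equiv.refl_trans]

lemma cycSucc_ne {L : ℕ} (hL : 2 ≤ L) (i : Fin L) : i ≠ cycSucc i := by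
  intro h
  have h' : (i : ℕ) = ((i : ℕ) + 1) % L := congrArg Fin.val h
  rcases Nat.lt_or_ge ((i : ℕ) + 1) L with hlt | hge
  · rw [Nat.mod_eq_of_lt hlt] at h'; omega
  · have : (i : ℕ) + 1 = L := by omega
    rw [this, Nat.mod_self] at h'
    omega

lemma theta_add_theta_neg (p q : ℝ) {x : ℤ} (hx : x ≠ 0) :
    theta p q x + theta p q (-x) = p + q := by
  unfold theta
  rcases lt_trichotomy x 0 with h | h | h
  · simp [h, not_lt.mpr h.le, neg_pos.mpr h]
    ring
  · exact absurd h hx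
  · simp [h, not_lt.mpr h.le, neg_neg_iff_pos.mpr h, not_lt.mpr (neg_nonpos.mpr h.le)]

/-- The signed reversed vector `∑_k sgn(k) |k_L,…,k₁⟩` is an eigenvector of the
multi-species ASEP Hamiltonian in the maximal sector with eigenvalue `−L(p+q)`:
`(H + L(p+q)) ∑_{k∈S_L} sgn(k) |k_L,…,k₁⟩ = 0`.  (Its coefficient at a
configuration `c` is `sgn(c_L,…,c₁)`.) -/
theorem signed_reversed_vector_eigen (p q : ℝ) (L : ℕ) (hL : 2 ≤ L) :
    ∀ c : Equiv.Perm (Fin L),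
      (∑ k : Equiv.Perm (Fin L),
          HmatMax p q L c k * ((Equiv.Perm.sign (Fin.revPerm.trans k) : ℤ) : ℝ))
        + (L : ℝ) * (p + q) * ((Equiv.Perm.sign (Fin.revPerm.trans c) : ℤ) : ℝ) = 0 := by
  intro c
  set s : Equiv.Perm (Fin L) → ℝ :=
    fun k => ((Equiv.Perm.sign (Fin.revPerm.trans k) : ℤ) : ℝ) with hs
  have hsign : ∀ i : Fin L, s (swapK c i) = -s c := by
    intro i
    have h1 : Fin.revPerm.trans (swapK c i) = c * Equiv.swap i (cycSucc i) * Fin.revPerm := rfl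
    have h2 : Fin.revPerm.trans c = c * Fin.revPerm := rfl
    simp only [hs, h1, h2, map_mul, Equiv.Perm.sign_swap (cycSucc_ne hL i)]
    push_cast
    ring
  have hne0 : ∀ i : Fin L, ((c i : ℤ)) - (c (cycSucc i) : ℤ) ≠ 0 := by
    intro i
    rw [sub_ne_zero]
    intro h
    exact cycSucc_ne hL i (c.injective (Fin.val_injective (by exact_mod_cast h)))
  have happ1 : ∀ i : Fin L, (swapK c i) i = c (cycSucc i) := by
    intro i; simp [swapK]
  have happ2 : ∀ i : Fin L, (swapK c i) (cycSucc i) = c i := by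
    intro i; simp [swapK]
  have key : ∑ k : Equiv.Perm (Fin L), HmatMax p q L c k * s k
      = ∑ i : Fin L, (theta p q ((c (cycSucc i) : ℤ) - (c i : ℤ)) * s (swapK c i)
          - theta p q ((c i : ℤ) - (c (cycSucc i) : ℤ)) * s c) := by
    simp only [HmatMax, Finset.sum_mul]
    rw [Finset.sum_comm]
    refine Finset.sum_congr rfl (fun i _ => ?_)
    have hcne : ∀ j : Fin L, c ≠ swapK c j := by
      intro j h
      exact cycSucc_ne hL j (c.injective (by rw [← happ1 j, ← h]))
    have hcond : ∀ k : Equiv.Perm (Fin L), (c = swapK k i) = (k = swapK c i) := by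
      intro k
      apply propext
      constructor
      · intro h; rw [h, swapK_swapK]
      · intro h; rw [h, swapK_swapK]
    have step : ∀ k : Equiv.Perm (Fin L),
        theta p q ((k i : ℤ) - (k (cycSucc i) : ℤ)) *
          ((if c = swapK k i then (1:ℝ) else 0) - (if c = k then 1 else 0)) * s k
        = (if k = swapK c i then theta p q ((k i : ℤ) - (k (cycSucc i) : ℤ)) * s k else 0)
          - (if k = c then theta p q ((k i : ℤ) - (k (cycSucc i) : ℤ)) * s k else 0) := by
      intro k
      rcases eq_or_ne k (swapK c i) with h1 | h1 <;> rcases eq_or_ne k c with h2 | h2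
      · subst h1; simp [swapK_swapK, hcne i, Ne.symm (hcne i)]
      · subst h1; simp [swapK_swapK, hcne i, Ne.symm (hcne i)]
      · simp [h2, hcne i, hcond k, Ne.symm (hcne i)]
      · simp [hcond k, h1, h2, Ne.symm h2]
    rw [Finset.sum_congr rfl (fun k _ => step k), Finset.sum_sub_distrib,
      Finset.sum_ite_eq' Finset.univ, Finset.sum_ite_eq' Finset.univ]
    simp [happ1, happ2]
  rw [key]
  have : ∀ i : Fin L, theta p q ((c (cycSucc i) : ℤ) - (c i : ℤ)) * s (swapK c i)
          - theta p q ((c i : ℤ) - (c (cycSucc i) : ℤ)) * s c = -((p + q) * s c) := by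
    intro i
    rw [hsign i]
    have := theta_add_theta_neg p q (hne0 i)
    have hx : ((c (cycSucc i) : ℤ)) - (c i : ℤ) = -(((c i : ℤ)) - (c (cycSucc i) : ℤ)) := by ring
    rw [hx]
    linear_combination (-(s c)) * this
  rw [Finset.sum_congr rfl (fun i _ => this i)]
  rw [Finset.sum_const, Finset.card_univ, Fintype.card_fin, nsmul_eq_mul]
  ring
end
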